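/- Let d ≥ 1, E ⊆ ℝ^d be a non-degenerate parallelepiped and let c : Λ'_E → ℂ satisfy |c(α)| ≤ C (1+|α|)^N for all α ∈ Λ'_E, for some constants C > 0 and N ≥ 0. Then for every Schwartz function φ on ℝ^d the series Σ_{α∈Λ'_E} c(α) φ̂(−α) converges absolutely, the map u(φ) = (2π)^{d/2} Σ_{α∈Λ'_E} c(α) φ̂(−α) defines a tempered distribution on ℝ^d, u is E-periodic (u(φ(·−k)) = u(φ) for all k ∈ Λ_E), and u is the limit in the sense of tempered distributions of the partial sums Σ_{α∈Λ'_E, |α|≤M} c(α) e^{i⟨·,α⟩} as M → ∞. -/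

import Mathlib

open MeasureTheory Filter
open scoped BigOperators InnerProductSpace Topology

noncomputable section

abbrev Euc (d : ℕ) := EuclideanSpace ℝ (Fin d)

/-- The lattice point `∑ i, j i • e i` associated with `j : ℤ^d`. -/
def latPt {d : ℕ} (e : Fin d → Euc d) (j : Fin d → ℤ) : Euc d :=
  ∑ i, (j i : ℝ) • e i

/-- The (closed) parallelepiped spanned by `e`. -/
def paraSet {d : ℕ} (e : Fin d → Euc d) : Set (Euc d) :=
  (fun t : Fin d → ℝ => ∑ i, t i • e i) '' (Set.univ.pi fun _ => Set.Icc (0:ℝ) 1)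

/-- Fourier coefficient `c(f, ξ) = |E|⁻¹ ∫_E f(x) e^{-i⟨x,ξ⟩} dx`. -/
def fourCoeff {d : ℕ} (e : Fin d → Euc d) (f : Euc d → ℂ) (ξ : Euc d) : ℂ :=
  (((volume (paraSet e)).toReal : ℂ))⁻¹ *
    ∫ x in paraSet e, f x * Complex.exp (-(Complex.I) * (⟪x, ξ⟫_ℝ : ℂ))

/-- Iterated partial derivatives along a list of coordinate directions. -/
def pdSeq {d : ℕ} : List (Fin d) → (Euc d → ℂ) → (Euc d → ℂ)
  | [], f => f
  | (i :: L), f => pdSeq L (fun x => fderiv ℝ f x (EuclideanSpace.single i 1))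

/-- The canonical list of directions attached to a multi-index `β`. -/
def mIdxL {d : ℕ} (β : Fin d → ℕ) : List (Fin d) :=
  (List.finRange d).flatMap fun i => List.replicate (β i) i

/-- The multi-index partial derivative `∂^β f`. -/
def pD {d : ℕ} (β : Fin d → ℕ) (f : Euc d → ℂ) : Euc d → ℂ := pdSeq (mIdxL β) f

/-- Fourier transform, normalized as `(2π)^{-d/2} ∫ f(x) e^{-i⟨x,ξ⟩} dx`. -/
def FT {d : ℕ} (f : Euc d → ℂ) (ξ : Euc d) : ℂ :=
  (((2 * Real.pi) ^ (-(d:ℝ)/2) : ℝ) : ℂ) *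
    ∫ x, f x * Complex.exp (-(Complex.I) * (⟪x, ξ⟫_ℝ : ℂ))

/-- Short-time Fourier transform with window `φ`. -/
def STFT {d : ℕ} (φ f : Euc d → ℂ) (x ξ : Euc d) : ℂ :=
  (((2 * Real.pi) ^ (-(d:ℝ)/2) : ℝ) : ℂ) *
    ∫ y, f y * (starRingEnd ℂ) (φ (y - x)) * Complex.exp (-(Complex.I) * (⟪y, ξ⟫_ℝ : ℂ))

/- ### Auxiliary lemmas -/

lemma aux_summable_g : Summable (fun n : ℤ => (((1:ℝ) + |(n:ℝ)|)^2)⁻¹) := by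
  have hnat : Summable (fun n : ℕ => (((1:ℝ) + |((n:ℤ):ℝ)|)^2)⁻¹) := by
    have := (summable_nat_add_iff (f := fun n : ℕ => ((n:ℝ)^2)⁻¹) 1).2
      (by simpa using Real.summable_one_div_nat_pow.2 (by norm_num : 1 < 2))
    apply this.congr
    intro n
    have h : |((n:ℤ):ℝ)| = (n:ℝ) := by simp
    rw [h]; push_cast; ring_nf
  exact Summable.of_nat_of_neg hnat (hnat.congr (by intro n; simp))

lemma aux_summable_P (d : ℕ) :
    Summable (fun ι : Fin d → ℤ => ∏ i, (((1:ℝ) + |((ι i : ℤ):ℝ)|)^2)⁻¹) := by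
  induction d with
  | zero => simpa using summable_of_finite_support (Set.Finite.subset (Set.finite_univ) (by simp))
  | succ n ih =>
      have key := Summable.mul_of_nonneg (f := fun m : ℤ => (((1:ℝ) + |(m:ℝ)|)^2)⁻¹)
        (g := fun ι : Fin n → ℤ => ∏ i, (((1:ℝ) + |((ι i : ℤ):ℝ)|)^2)⁻¹)
        aux_summable_g ih (fun _ => by positivity) (fun _ => by positivity)
      rw [← Equiv.summable_iff (Fin.consEquiv (fun _ : Fin (n+1) => ℤ))]
      apply key.congr
      intro p
      simp only [Function.comp_apply, Fin.consEquiv_apply]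
      rw [Fin.prod_univ_succ]
      simp

open scoped FourierTransform in
lemma aux_FT_eq {d : ℕ} (f : Euc d → ℂ) (ξ : Euc d) :
    FT f ξ = (((2 * Real.pi) ^ (-(d:ℝ)/2) : ℝ) : ℂ) * (𝓕 f ((2 * Real.pi)⁻¹ • ξ)) := by
  rw [Real.fourier_eq']
  unfold FT
  congr 1
  apply integral_congr_ae; filter_upwards with v
  rw [smul_eq_mul, real_inner_smul_right, mul_comm]
  congr 2
  have h : (2 * Real.pi) * (2 * Real.pi)⁻¹ = 1 := by
    have := Real.pi_ne_zero; field_simp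
  have h2 : -2 * Real.pi * ((2 * Real.pi)⁻¹ * ⟪v, ξ⟫_ℝ) = -⟪v, ξ⟫_ℝ := by
    calc -2 * Real.pi * ((2 * Real.pi)⁻¹ * ⟪v, ξ⟫_ℝ)
        = -(((2*Real.pi) * (2*Real.pi)⁻¹) * ⟪v, ξ⟫_ℝ) := by ring
      _ = -⟪v, ξ⟫_ℝ := by rw [h]; ring
  rw [h2]; push_cast; ring

lemma aux_FT_translate {d : ℕ} (φ : Euc d → ℂ) (l ξ : Euc d) :
    FT (fun y => φ (y - l)) ξ
      = Complex.exp (-(Complex.I) * ((⟪l, ξ⟫_ℝ : ℝ) : ℂ)) * FT φ ξ := by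
  unfold FT
  have h1 : (∫ y, φ (y - l) * Complex.exp (-(Complex.I) * ((⟪y, ξ⟫_ℝ : ℝ) : ℂ)))
      = ∫ x, φ x * Complex.exp (-(Complex.I) * ((⟪x + l, ξ⟫_ℝ : ℝ) : ℂ)) := by
    rw [← integral_sub_right_eq_self
      (fun x => φ x * Complex.exp (-(Complex.I) * ((⟪x + l, ξ⟫_ℝ : ℝ) : ℂ))) l]
    apply integral_congr_ae; filter_upwards with y
    rw [sub_add_cancel]
  rw [h1]
  have h2 : ∀ x : Euc d, φ x * Complex.exp (-(Complex.I) * ((⟪x + l, ξ⟫_ℝ : ℝ) : ℂ))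
      = Complex.exp (-(Complex.I) * ((⟪l, ξ⟫_ℝ : ℝ) : ℂ)) *
        (φ x * Complex.exp (-(Complex.I) * ((⟪x, ξ⟫_ℝ : ℝ) : ℂ))) := by
    intro x
    rw [inner_add_left]
    push_cast
    rw [show -(Complex.I) * ((⟪x, ξ⟫_ℝ : ℂ) + (⟪l, ξ⟫_ℝ : ℂ))
        = -(Complex.I) * (⟪l, ξ⟫_ℝ : ℂ) + -(Complex.I) * (⟪x, ξ⟫_ℝ : ℂ) by ring]
    rw [Complex.exp_add]
    ring
  simp_rw [h2]
  rw [integral_const_mul]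
  ring

lemma aux_inner_latPt {d : ℕ} (e e' : Fin d → Euc d)
    (hdual : ∀ j k, ⟪e j, e' k⟫_ℝ = if j = k then 2 * Real.pi else 0)
    (k ι : Fin d → ℤ) :
    ⟪latPt e k, latPt e' ι⟫_ℝ = 2 * Real.pi * ((∑ j, k j * ι j : ℤ) : ℝ) := by
  unfold latPt
  rw [sum_inner]
  have : ∀ j, ⟪((k j : ℝ) • e j : Euc d), (∑ i, (ι i : ℝ) • e' i : Euc d)⟫_ℝ
      = (k j : ℝ) * ((ι j : ℝ) * (2 * Real.pi)) := by
    intro j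
    rw [real_inner_smul_left, inner_sum]
    congr 1
    simp_rw [real_inner_smul_right, hdual]
    rw [Finset.sum_eq_single j]
    · simp
    · intro b _ hb
      simp [Ne.symm hb]
    · simp
  simp_rw [this]
  push_cast
  rw [Finset.mul_sum]
  apply Finset.sum_congr rfl
  intro j _
  ring

set_option maxHeartbeats 1000000 in
/-- polynomially bounded Fourier coefficients define an `E`-periodic tempered
distribution `u(φ) = (2π)^{d/2} Σ_α c(α) φ̂(−α)`, which is the limit in `𝒮'` of the partial
sums `Σ_{α∈Λ'_E, |α| ≤ M} c(α) e^{i⟨·,α⟩}`. -/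
theorem periodic_tempered_distribution_of_polynomial_coeff
    {d : ℕ} (hd : 1 ≤ d)
    (e e' : Fin d → Euc d) (he : LinearIndependent ℝ e)
    (hdual : ∀ j k, ⟪e j, e' k⟫_ℝ = if j = k then 2 * Real.pi else 0)
    (c : (Fin d → ℤ) → ℂ) (C N : ℝ) (hC : 0 < C) (hN : 0 ≤ N)
    (hc : ∀ ι : Fin d → ℤ, ‖c ι‖ ≤ C * (1 + ‖latPt e' ι‖) ^ N) :
    (∀ φ : SchwartzMap (Euc d) ℂ,
      Summable fun ι : Fin d → ℤ => ‖c ι * FT (⇑φ) (-(latPt e' ι))‖) ∧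
    ∃ u : SchwartzMap (Euc d) ℂ →L[ℂ] ℂ,
      (∀ φ : SchwartzMap (Euc d) ℂ,
        u φ = (((2 * Real.pi) ^ ((d:ℝ)/2) : ℝ) : ℂ) *
          ∑' ι : Fin d → ℤ, c ι * FT (⇑φ) (-(latPt e' ι))) ∧
      (∀ (φ φ' : SchwartzMap (Euc d) ℂ) (k : Fin d → ℤ),
        (∀ y : Euc d, φ' y = φ (y - latPt e k)) → u φ' = u φ) ∧
      (∀ ψ : SchwartzMap (Euc d) ℂ,
        Tendsto
          (fun M : ℕ => ∑' ι : Fin d → ℤ,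
            if ‖latPt e' ι‖ ≤ (M : ℝ) then
              c ι * ∫ x : Euc d, Complex.exp (Complex.I * (⟪x, latPt e' ι⟫_ℝ : ℂ)) * ψ x
            else 0)
          atTop (nhds (u ψ))) := by
  classical
  have hπ : (0:ℝ) < Real.pi := Real.pi_pos
  have h2π : (1:ℝ) ≤ 2 * Real.pi := by
    have := Real.pi_gt_three; linarith
  -- dual vectors are linearly independent
  have he' : LinearIndependent ℝ e' := by
    rw [Fintype.linearIndependent_iff]
    intro g hg j
    have h := congrArg (fun v : Euc d => ⟪e j, v⟫_ℝ) hg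
    simp only [inner_sum, real_inner_smul_right, hdual, inner_zero_right] at h
    rw [Finset.sum_eq_single j (by intro b _ hb; simp [Ne.symm hb]) (by simp)] at h
    simp only [if_pos rfl] at h
    have : g j * (2 * Real.pi) = 0 := h
    rcases mul_eq_zero.1 this with h' | h'
    · exact h'
    · nlinarith
  have : Nonempty (Fin d) := ⟨⟨0, hd⟩⟩
  have hb : Fintype.card (Fin d) = Module.finrank ℝ (Euc d) := by
    simp [finrank_euclideanSpace_fin]
  let b : Module.Basis (Fin d) ℝ (Euc d) := basisOfLinearIndependentOfCardEqFinrank he' hb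
  let T : Euc d →L[ℝ] (Fin d → ℝ) := LinearMap.toContinuousLinearMap (b.equivFun.toLinearMap)
  set K : ℝ := max 1 ‖T‖ with hKdef
  have hK1 : (1:ℝ) ≤ K := le_max_left _ _
  have hTα : ∀ ι : Fin d → ℤ, T (latPt e' ι) = fun i => (ι i : ℝ) := by
    intro ι
    have hbe : ∀ i, b i = e' i := fun i =>
      congrFun (coe_basisOfLinearIndependentOfCardEqFinrank he' hb) i
    have h1 : latPt e' ι = b.equivFun.symm (fun i => (ι i : ℝ)) := by
      rw [Module.Basis.equivFun_symm_apply]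
      unfold latPt
      apply Finset.sum_congr rfl
      intro i _
      rw [hbe]
    rw [h1]
    exact b.equivFun.apply_symm_apply _
  have hKb : ∀ (ι : Fin d → ℤ) (i : Fin d), (1:ℝ) + |((ι i : ℤ):ℝ)| ≤ K * (1 + ‖latPt e' ι‖) := by
    intro ι i
    have h1 : |((ι i : ℤ):ℝ)| ≤ ‖T (latPt e' ι)‖ := by
      rw [hTα]
      simpa using norm_le_pi_norm (fun i => ((ι i : ℤ):ℝ)) i
    have h2 : ‖T (latPt e' ι)‖ ≤ ‖T‖ * ‖latPt e' ι‖ := T.le_opNorm _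
    have h3 : ‖T‖ ≤ K := le_max_right _ _
    have h4 : (0:ℝ) ≤ ‖latPt e' ι‖ := norm_nonneg _
    nlinarith
  set n₀ : ℕ := ⌈N⌉₊ with hn₀
  set kk : ℕ := n₀ + 2 * d with hkk
  set pt : (Fin d → ℤ) → Euc d := fun ι => (2 * Real.pi)⁻¹ • (-(latPt e' ι)) with hptdef
  have hptnorm : ∀ ι, ‖latPt e' ι‖ = (2 * Real.pi) * ‖pt ι‖ := by
    intro ι
    rw [hptdef]
    simp only [norm_smul, norm_neg, Real.norm_eq_abs]
    rw [abs_of_pos (by positivity : (0:ℝ) < (2 * Real.pi)⁻¹)]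
    field_simp
  set S : SchwartzMap (Euc d) ℂ → ℝ :=
    fun ψ => ((Finset.Iic (kk,0)).sup (schwartzSeminormFamily ℂ (Euc d) ℂ)) ψ with hSdef
  have hS0 : ∀ ψ, 0 ≤ S ψ := fun ψ => apply_nonneg _ _
  set P : (Fin d → ℤ) → ℝ := fun ι => ∏ i, (((1:ℝ) + |((ι i : ℤ):ℝ)|)^2)⁻¹ with hPdef
  have hPsum : Summable P := aux_summable_P d
  have hP0 : ∀ ι, 0 < P ι := fun ι => Finset.prod_pos (fun i _ => by positivity)
  set B : ℝ := C * (2 * Real.pi * K)^kk * 2^kk with hBdef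
  have hB0 : 0 ≤ B := by positivity
  -- the key bound
  have key : ∀ (ψ : SchwartzMap (Euc d) ℂ) (ι : Fin d → ℤ),
      ‖c ι * ψ (pt ι)‖ ≤ B * S ψ * P ι := by
    intro ψ ι
    set a : ℝ := ‖latPt e' ι‖ with hadef
    set p : ℝ := ‖pt ι‖ with hpdef
    have ha0 : 0 ≤ a := norm_nonneg _
    have hp0 : 0 ≤ p := norm_nonneg _
    have hap : a = 2 * Real.pi * p := hptnorm ι
    have hψb : (1 + p)^kk * ‖ψ (pt ι)‖ ≤ 2^kk * S ψ := by
      have := SchwartzMap.one_add_le_sup_seminorm_apply (𝕜 := ℂ) (m := (kk,0))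
        (k := kk) (n := 0) le_rfl le_rfl ψ (pt ι)
      simp only [norm_iteratedFDeriv_zero] at this
      exact this
    have hc' : ‖c ι‖ ≤ C * (1+a)^n₀ := by
      refine (hc ι).trans ?_
      have h1a : (1:ℝ) ≤ 1 + a := by linarith
      calc C * (1+a)^N ≤ C * (1+a)^(n₀:ℝ) := by
            apply mul_le_mul_of_nonneg_left _ hC.le
            exact Real.rpow_le_rpow_of_exponent_le h1a (Nat.le_ceil N)
        _ = C * (1+a)^n₀ := by rw [Real.rpow_natCast]
    set Q : ℝ := ∏ i, ((1:ℝ) + |((ι i : ℤ):ℝ)|)^2 with hQdef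
    have hQ0 : 0 < Q := Finset.prod_pos (fun i _ => by positivity)
    have hPQ : P ι = Q⁻¹ := by
      rw [hPdef, hQdef, ← Finset.prod_inv_distrib]
    have hQle : Q ≤ (K * (1+a))^(2*d) := by
      have h1 : Q ≤ ∏ _i : Fin d, (K * (1+a))^2 := by
        apply Finset.prod_le_prod
        · intro i _; positivity
        · intro i _
          apply pow_le_pow_left₀ (by positivity)
          exact hKb ι i
      calc Q ≤ ∏ _i : Fin d, (K * (1+a))^2 := h1
        _ = ((K * (1+a))^2)^d := by rw [Finset.prod_const]; simp
        _ = (K * (1+a))^(2*d) := by rw [← pow_mul, mul_comm]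
    have haw : 1 + a ≤ (2 * Real.pi) * (1 + p) := by nlinarith
    have h1a : (0:ℝ) < 1 + a := by linarith
    have h1p : (0:ℝ) < 1 + p := by linarith
    have hmain : (1+a)^n₀ * Q ≤ (2 * Real.pi * K)^kk * (1+p)^kk := by
      calc (1+a)^n₀ * Q ≤ (1+a)^n₀ * (K * (1+a))^(2*d) := by
            apply mul_le_mul_of_nonneg_left hQle (by positivity)
        _ = K^(2*d) * (1+a)^kk := by rw [mul_pow, hkk, pow_add]; ring
        _ ≤ K^(2*d) * ((2 * Real.pi) * (1 + p))^kk := by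
            apply mul_le_mul_of_nonneg_left _ (by positivity)
            exact pow_le_pow_left₀ h1a.le haw kk
        _ = K^(2*d) * (2 * Real.pi)^kk * (1+p)^kk := by rw [mul_pow]; ring
        _ ≤ K^kk * (2 * Real.pi)^kk * (1+p)^kk := by
            have : K^(2*d) ≤ K^kk := pow_le_pow_right₀ hK1 (by omega)
            apply mul_le_mul_of_nonneg_right _ (by positivity)
            apply mul_le_mul_of_nonneg_right this (by positivity)
        _ = (2 * Real.pi * K)^kk * (1+p)^kk := by rw [mul_pow]; ring
    have hfinal : ‖c ι‖ * ‖ψ (pt ι)‖ * Q ≤ B * S ψ := by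
      have hn : (0:ℝ) ≤ ‖ψ (pt ι)‖ := norm_nonneg _
      calc ‖c ι‖ * ‖ψ (pt ι)‖ * Q ≤ (C * (1+a)^n₀) * ‖ψ (pt ι)‖ * Q := by
            apply mul_le_mul_of_nonneg_right _ hQ0.le
            exact mul_le_mul_of_nonneg_right hc' hn
        _ = C * ((1+a)^n₀ * Q) * ‖ψ (pt ι)‖ := by ring
        _ ≤ C * ((2 * Real.pi * K)^kk * (1+p)^kk) * ‖ψ (pt ι)‖ := by
            apply mul_le_mul_of_nonneg_right _ hn
            exact mul_le_mul_of_nonneg_left hmain hC.le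
        _ = C * (2 * Real.pi * K)^kk * ((1+p)^kk * ‖ψ (pt ι)‖) := by ring
        _ ≤ C * (2 * Real.pi * K)^kk * (2^kk * S ψ) := by
            apply mul_le_mul_of_nonneg_left hψb (by positivity)
        _ = B * S ψ := by rw [hBdef]; ring
    rw [norm_mul, hPQ]
    calc ‖c ι‖ * ‖ψ (pt ι)‖ = (‖c ι‖ * ‖ψ (pt ι)‖ * Q) * Q⁻¹ := by
          field_simp
      _ ≤ (B * S ψ) * Q⁻¹ := by
          apply mul_le_mul_of_nonneg_right hfinal (by positivity)
      _ = B * S ψ * Q⁻¹ := by ring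
  have hnormsum : ∀ ψ : SchwartzMap (Euc d) ℂ, Summable fun ι => ‖c ι * ψ (pt ι)‖ := by
    intro ψ
    exact Summable.of_nonneg_of_le (fun _ => norm_nonneg _) (key ψ) (hPsum.mul_left (B * S ψ))
  have hsum : ∀ ψ : SchwartzMap (Euc d) ℂ, Summable fun ι => c ι * ψ (pt ι) :=
    fun ψ => (hnormsum ψ).of_norm
  -- the continuous linear functional on Schwartz space (pre-composition with Fourier transform)
  let L : SchwartzMap (Euc d) ℂ →L[ℂ] ℂ := SchwartzMap.mkCLMtoNormedSpace
    (fun ψ => ∑' ι, c ι * ψ (pt ι))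
    (by
      intro f g
      rw [← Summable.tsum_add (hsum f) (hsum g)]
      apply tsum_congr
      intro ι
      simp [SchwartzMap.add_apply, mul_add])
    (by
      intro a f
      simp only [SchwartzMap.smul_apply, smul_eq_mul, RingHom.id_apply]
      rw [← tsum_mul_left]
      apply tsum_congr
      intro ι
      ring)
    (by
      refine ⟨Finset.Iic (kk,0), B * ∑' ι, P ι, ?_, ?_⟩
      · have : 0 ≤ ∑' ι, P ι := tsum_nonneg (fun ι => (hP0 ι).le)
        positivity
      · intro f
        calc ‖∑' ι, c ι * f (pt ι)‖ ≤ ∑' ι, ‖c ι * f (pt ι)‖ :=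
              norm_tsum_le_tsum_norm (hnormsum f)
          _ ≤ ∑' ι, B * S f * P ι := by
              apply Summable.tsum_le_tsum (key f) (hnormsum f) (hPsum.mul_left (B * S f))
          _ = B * S f * ∑' ι, P ι := tsum_mul_left
          _ = (B * ∑' ι, P ι) * S f := by ring
          _ = (B * ∑' ι, P ι) *
                ((Finset.Iic (kk,0)).sup (schwartzSeminormFamily ℂ (Euc d) ℂ)) f := rfl)
  let u : SchwartzMap (Euc d) ℂ →L[ℂ] ℂ := L.comp (SchwartzMap.fourierTransformCLM ℂ)
  have hL : ∀ ψ : SchwartzMap (Euc d) ℂ, L ψ = ∑' ι, c ι * ψ (pt ι) := fun ψ => rfl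
  have hu : ∀ φ : SchwartzMap (Euc d) ℂ,
      u φ = ∑' ι, c ι * (SchwartzMap.fourierTransformCLM ℂ φ) (pt ι) := by
    intro φ
    rw [ContinuousLinearMap.comp_apply]
    exact hL _
  have hpref : (((2 * Real.pi) ^ ((d:ℝ)/2) : ℝ) : ℂ) * (((2 * Real.pi) ^ (-(d:ℝ)/2) : ℝ) : ℂ)
      = 1 := by
    rw [← Complex.ofReal_mul, ← Real.rpow_add (by positivity),
      show (d:ℝ)/2 + -(d:ℝ)/2 = 0 by ring, Real.rpow_zero]
    norm_num
  have hFT : ∀ (φ : SchwartzMap (Euc d) ℂ) (ι : Fin d → ℤ),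
      c ι * FT (⇑φ) (-(latPt e' ι))
        = (((2 * Real.pi) ^ (-(d:ℝ)/2) : ℝ) : ℂ) *
          (c ι * (SchwartzMap.fourierTransformCLM ℂ φ) (pt ι)) := by
    intro φ ι
    have h1 : (SchwartzMap.fourierTransformCLM ℂ φ) (pt ι)
        = FourierTransform.fourier (⇑φ : Euc d → ℂ) (pt ι) := by
      rw [SchwartzMap.fourierTransformCLM_apply, SchwartzMap.fourier_coe]
    rw [h1, hptdef, aux_FT_eq]
    ring
  have huφ : ∀ φ : SchwartzMap (Euc d) ℂ,
      u φ = (((2 * Real.pi) ^ ((d:ℝ)/2) : ℝ) : ℂ) *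
        ∑' ι : Fin d → ℤ, c ι * FT (⇑φ) (-(latPt e' ι)) := by
    intro φ
    have h1 : ∑' ι : Fin d → ℤ, c ι * FT (⇑φ) (-(latPt e' ι))
        = (((2 * Real.pi) ^ (-(d:ℝ)/2) : ℝ) : ℂ) *
          ∑' ι, c ι * (SchwartzMap.fourierTransformCLM ℂ φ) (pt ι) := by
      rw [← tsum_mul_left]
      exact tsum_congr (hFT φ)
    rw [h1, ← mul_assoc, hpref, one_mul]
    exact hu φ
  have hsummFT : ∀ φ : SchwartzMap (Euc d) ℂ,
      Summable fun ι : Fin d → ℤ => ‖c ι * FT (⇑φ) (-(latPt e' ι))‖ := by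
    intro φ
    apply Summable.congr
      ((hnormsum (SchwartzMap.fourierTransformCLM ℂ φ)).mul_left
        ‖(((2 * Real.pi) ^ (-(d:ℝ)/2) : ℝ) : ℂ)‖)
    intro ι
    simp [hFT φ ι, norm_mul]
  refine ⟨hsummFT, u, huφ, ?_, ?_⟩
  · -- periodicity
    intro φ φ' k hφ'
    rw [huφ, huφ]
    congr 1
    apply tsum_congr
    intro ι
    congr 1
    have hfun : ⇑φ' = fun y => φ (y - latPt e k) := funext hφ'
    rw [hfun, aux_FT_translate]
    have hi : ⟪latPt e k, -(latPt e' ι)⟫_ℝ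
        = -(2 * Real.pi * ((∑ j, k j * ι j : ℤ) : ℝ)) := by
      rw [inner_neg_right, aux_inner_latPt e e' hdual]
    rw [hi]
    have hexp : Complex.exp (-(Complex.I) *
        (((-(2 * Real.pi * ((∑ j, k j * ι j : ℤ) : ℝ))) : ℝ) : ℂ)) = 1 := by
      rw [← Complex.exp_int_mul_two_pi_mul_I (∑ j, k j * ι j)]
      congr 1
      push_cast
      ring
    rw [hexp, one_mul]
  · -- limit of partial sums
    intro ψ
    set g : (Fin d → ℤ) → ℂ := fun ι =>
      (((2 * Real.pi) ^ ((d:ℝ)/2) : ℝ) : ℂ) * (c ι * FT (⇑ψ) (-(latPt e' ι))) with hgdef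
    have hint : ∀ ι : Fin d → ℤ,
        c ι * ∫ x : Euc d, Complex.exp (Complex.I * (⟪x, latPt e' ι⟫_ℝ : ℂ)) * ψ x = g ι := by
      intro ι
      have h1 : FT (⇑ψ) (-(latPt e' ι)) = (((2 * Real.pi) ^ (-(d:ℝ)/2) : ℝ) : ℂ) *
          ∫ x : Euc d, Complex.exp (Complex.I * (⟪x, latPt e' ι⟫_ℝ : ℂ)) * ψ x := by
        unfold FT
        congr 1
        apply integral_congr_ae; filter_upwards with x
        rw [inner_neg_right]
        push_cast
        ring
      simp only [hgdef]
      rw [h1]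
      calc c ι * ∫ x : Euc d, Complex.exp (Complex.I * (⟪x, latPt e' ι⟫_ℝ : ℂ)) * ψ x
          = (1:ℂ) * (c ι * ∫ x : Euc d,
              Complex.exp (Complex.I * (⟪x, latPt e' ι⟫_ℝ : ℂ)) * ψ x) := (one_mul _).symm
        _ = (((2 * Real.pi) ^ ((d:ℝ)/2) : ℝ) : ℂ) *
              (c ι * ((((2 * Real.pi) ^ (-(d:ℝ)/2) : ℝ) : ℂ) *
                ∫ x : Euc d, Complex.exp (Complex.I * (⟪x, latPt e' ι⟫_ℝ : ℂ)) * ψ x)) := by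
            rw [← hpref]; ring
    have hgsum : Summable fun ι => ‖g ι‖ := by
      apply Summable.congr ((hsummFT ψ).mul_left ‖(((2 * Real.pi) ^ ((d:ℝ)/2) : ℝ) : ℂ)‖)
      intro ι
      simp only [hgdef, norm_mul]
    have h2 : ∑' ι, g ι = u ψ := by
      rw [huφ ψ, hgdef, tsum_mul_left]
    have h1 : Tendsto (fun M : ℕ => ∑' ι, if ‖latPt e' ι‖ ≤ (M:ℝ) then g ι else 0)
        atTop (𝓝 (∑' ι, g ι)) := by
      apply tendsto_tsum_of_dominated_convergence hgsum
      · intro ι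
        apply Tendsto.congr' _ (tendsto_const_nhds (x := g ι))
        filter_upwards [eventually_ge_atTop ⌈‖latPt e' ι‖⌉₊] with M hM
        rw [if_pos]
        exact le_trans (Nat.le_ceil _) (by exact_mod_cast hM)
      · filter_upwards with M
        intro ι
        split_ifs
        · exact le_rfl
        · simp
    rw [← h2]
    apply h1.congr
    intro M
    apply tsum_congr
    intro ι
    by_cases h : ‖latPt e' ι‖ ≤ (M:ℝ)
    · rw [if_pos h, if_pos h, hint ι]
    · rw [if_neg h, if_neg h]

end
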